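/- arXiv:2304.00607 — 3 statements merged into one kernel-verified Lean document; each statement's English description precedes it below -/
import Mathlib

section
/- Fix (ε,d) ∈ {(1,1),(−1,0),(1,0)} and let r ≥ r₁. Define x₀ ∈ V_r by: x₀ = 0 if (ε,d) = (−1,0) and r = 1; x₀ = i·√2·h if (ε,d) = (1,1) and r = 1; and x₀ = e_{r−1} − f_{r−1} otherwise; and set φ₂ = e_r + f_r + x₀ (an isotropic vector). Then for every triple (p₀,p₁,p₂) of lines in P_r that are pairwise non-orthogonal (ω(v_i,v_j) ≠ 0 for i ≠ j, for representatives v_i) and whose representatives v₀,v₁,v₂ are linearly independent, there exists g ∈ G_r with g·p₀ = [e_r], g·p₁ = [f_r], and g·p₂ = [φ₂]. -/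
noncomputable section

open scoped Classical

namespace DCM

/-- `Vc r d` is `ℂ^(2r+d)`, with coordinates taken in the ordered basis
`e_r, …, e_1, (h), f_1, …, f_r` (the middle vector `h` being present only if `d = 1`). -/
abbrev Vc (r d : ℕ) := Fin (2 * r + d) → ℂ

/-- `e_i` for `1 ≤ i ≤ r`: the standard basis vector at position `r - i`. -/
def eV (r d i : ℕ) : Vc r d := fun k => if (k : ℕ) = r - i then 1 else 0

/-- `h`: the standard basis vector at position `r` (relevant only when `d = 1`). -/
def hV (r d : ℕ) : Vc r d := fun k => if (k : ℕ) = r then 1 else 0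

/-- `f_i` for `1 ≤ i ≤ r`: the standard basis vector at position `r + d + i - 1`. -/
def fV (r d i : ℕ) : Vc r d := fun k => if (k : ℕ) = r + d + i - 1 then 1 else 0

/-- The ε-symmetric bilinear form ω on `Vc r d`, determined by `ω(e_i,f_j) = δ_ij`,
`ω(f_i,e_j) = ε·δ_ij`, `ω(e_i,e_j) = ω(f_i,f_j) = 0`, and (when `d = 1`)
`ω(h,h) = 1` and `h` orthogonal to all `e_i`, `f_i`. -/
def om (ε : ℂ) (r d : ℕ) (v w : Vc r d) : ℂ :=
  (∑ j : Fin r,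
    (v ⟨r - 1 - (j : ℕ), by have := j.isLt; omega⟩ *
        w ⟨r + d + (j : ℕ), by have := j.isLt; omega⟩ +
      ε * v ⟨r + d + (j : ℕ), by have := j.isLt; omega⟩ *
        w ⟨r - 1 - (j : ℕ), by have := j.isLt; omega⟩)) +
  (if hd : d = 1 then v ⟨r, by omega⟩ * w ⟨r, by omega⟩ else 0)

/-- `v` is a nonzero isotropic vector, i.e. it represents a line `[v] ∈ P_r`. -/
def IsoV (ε : ℂ) (r d : ℕ) (v : Vc r d) : Prop := v ≠ 0 ∧ om ε r d v v = 0

/-- `g` lies in `G_r`, the group of linear automorphisms preserving ω. -/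
def InG (ε : ℂ) (r d : ℕ) (g : Vc r d ≃ₗ[ℂ] Vc r d) : Prop :=
  ∀ v w, om ε r d (g v) (g w) = om ε r d v w

/-- The ω-cross-ratio `CR₀`. -/
def CR0 (ε : ℂ) (r d : ℕ) (v0 v1 v2 v3 : Vc r d) : ℂ :=
  (om ε r d v0 v2 * om ε r d v1 v3) / (om ε r d v0 v3 * om ε r d v1 v2)

/-- The ω-cross-ratio `CR₁`. -/
def CR1 (ε : ℂ) (r d : ℕ) (v0 v1 v2 v3 : Vc r d) : ℂ := (CR0 ε r d v1 v2 v0 v3)⁻¹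

/-- The ω-cross-ratio `CR₂`. -/
def CR2 (ε : ℂ) (r d : ℕ) (v0 v1 v2 v3 : Vc r d) : ℂ := CR0 ε r d v2 v0 v1 v3

/-- `(v0,v1,v2,v3)` represents a tuple of lines in `P_r^{(4)}`:
all lines isotropic and pairwise non-orthogonal. -/
def Conf4 (ε : ℂ) (r d : ℕ) (v0 v1 v2 v3 : Vc r d) : Prop :=
  IsoV ε r d v0 ∧ IsoV ε r d v1 ∧ IsoV ε r d v2 ∧ IsoV ε r d v3 ∧
  om ε r d v0 v1 ≠ 0 ∧ om ε r d v0 v2 ≠ 0 ∧ om ε r d v0 v3 ≠ 0 ∧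
  om ε r d v1 v2 ≠ 0 ∧ om ε r d v1 v3 ≠ 0 ∧ om ε r d v2 v3 ≠ 0

/-- `(v0,…,v4)` represents a tuple of lines in `P_r^{(5)}`. -/
def Conf5 (ε : ℂ) (r d : ℕ) (v0 v1 v2 v3 v4 : Vc r d) : Prop :=
  Conf4 ε r d v0 v1 v2 v3 ∧ IsoV ε r d v4 ∧
  om ε r d v0 v4 ≠ 0 ∧ om ε r d v1 v4 ≠ 0 ∧ om ε r d v2 v4 ≠ 0 ∧ om ε r d v3 v4 ≠ 0

/-- ω restricted to the span of `s` is nondegenerate. -/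
def NondegOn (ε : ℂ) (r d : ℕ) (s : Set (Vc r d)) : Prop :=
  ∀ x ∈ Submodule.span ℂ s, (∀ y ∈ Submodule.span ℂ s, om ε r d x y = 0) → x = 0

/-- `(v0,v1,v2,v3)` represents a tuple of lines in `P_r^{{4}}`: pairwise non-orthogonal
isotropic lines, linearly independent, spanning a nondegenerate subspace. -/
def Gen4 (ε : ℂ) (r d : ℕ) (v0 v1 v2 v3 : Vc r d) : Prop :=
  Conf4 ε r d v0 v1 v2 v3 ∧ LinearIndependent ℂ ![v0, v1, v2, v3] ∧
  NondegOn ε r d {v0, v1, v2, v3}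

/-- `(v0,…,v4)` represents a tuple of lines in `P_r^{{5}}`: every 4-element subtuple
(in the induced order) lies in `P_r^{{4}}`. -/
def Gen5 (ε : ℂ) (r d : ℕ) (v0 v1 v2 v3 v4 : Vc r d) : Prop :=
  Conf5 ε r d v0 v1 v2 v3 v4 ∧
  Gen4 ε r d v0 v1 v2 v3 ∧ Gen4 ε r d v0 v1 v2 v4 ∧ Gen4 ε r d v0 v1 v3 v4 ∧
  Gen4 ε r d v0 v2 v3 v4 ∧ Gen4 ε r d v1 v2 v3 v4

/-- `Γ(z₁,z₂) = 1 - z₁ - z₂`. -/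
def Gam (z1 z2 : ℂ) : ℂ := 1 - z1 - z2

/-- `Δ(z₁,z₂) = Γ(z₁,z₂)² - 2(1+ε)·z₁z₂`. -/
def Del (ε z1 z2 : ℂ) : ℂ := Gam z1 z2 ^ 2 - 2 * (1 + ε) * z1 * z2

/-- `Δ^{1/2}`, relative to a fixed choice `sq` of complex square root:
`Γ` if `ε = -1`, and `sq ∘ Δ` otherwise. -/
def DelHalf (ε : ℂ) (sq : ℂ → ℂ) (z1 z2 : ℂ) : ℂ :=
  if ε = -1 then Gam z1 z2 else sq (Del ε z1 z2)

/-- `φ₊ = (Δ^{1/2} + Γ)/2`. -/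
def phiP (ε : ℂ) (sq : ℂ → ℂ) (z1 z2 : ℂ) : ℂ := (DelHalf ε sq z1 z2 + Gam z1 z2) / 2

/-- `φ₋ = (Δ^{1/2} - Γ)/2`. -/
def phiM (ε : ℂ) (sq : ℂ → ℂ) (z1 z2 : ℂ) : ℂ := (DelHalf ε sq z1 z2 - Gam z1 z2) / 2


section Aux
open Module Submodule LinearMap

variable {r d : ℕ} {ε : ℂ}

/-- standard basis vector at position `t`. -/
def sv (r d : ℕ) (t : ℕ) : Vc r d := fun k => if (k : ℕ) = t then 1 else 0

lemma om_add_left (v v' w : Vc r d) :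
    om ε r d (v + v') w = om ε r d v w + om ε r d v' w := by
  unfold om
  split_ifs with hd <;>
  · rw [add_add_add_comm, ← Finset.sum_add_distrib]
    congr 1
    · exact Finset.sum_congr rfl fun j _ => by simp only [Pi.add_apply]; ring
    · (try simp only [Pi.add_apply]); ring

lemma om_add_right (v w w' : Vc r d) :
    om ε r d v (w + w') = om ε r d v w + om ε r d v w' := by
  unfold om
  split_ifs with hd <;>
  · rw [add_add_add_comm, ← Finset.sum_add_distrib]
    congr 1
    · exact Finset.sum_congr rfl fun j _ => by simp only [Pi.add_apply]; ring
    · (try simp only [Pi.add_apply]); ring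

lemma om_smul_left (c : ℂ) (v w : Vc r d) :
    om ε r d (c • v) w = c * om ε r d v w := by
  unfold om
  split_ifs with hd <;>
  · rw [mul_add, Finset.mul_sum]
    congr 1
    · exact Finset.sum_congr rfl fun j _ => by simp only [Pi.smul_apply, smul_eq_mul]; ring
    · (try simp only [Pi.smul_apply, smul_eq_mul]); ring

lemma om_smul_right (c : ℂ) (v w : Vc r d) :
    om ε r d v (c • w) = c * om ε r d v w := by
  unfold om
  split_ifs with hd <;>
  · rw [mul_add, Finset.mul_sum]
    congr 1
    · exact Finset.sum_congr rfl fun j _ => by simp only [Pi.smul_apply, smul_eq_mul]; ring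
    · (try simp only [Pi.smul_apply, smul_eq_mul]); ring

lemma om_zero_left (w : Vc r d) : om ε r d 0 w = 0 := by
  unfold om; split_ifs <;> simp

lemma om_zero_right (v : Vc r d) : om ε r d v 0 = 0 := by
  unfold om; split_ifs <;> simp

lemma om_sub_left (v v' w : Vc r d) :
    om ε r d (v - v') w = om ε r d v w - om ε r d v' w := by
  have h := om_add_left (ε := ε) (v - v') v' w
  rw [sub_add_cancel] at h; linear_combination -h

lemma om_sub_right (v w w' : Vc r d) :
    om ε r d v (w - w') = om ε r d v w - om ε r d v w' := by
  have h := om_add_right (ε := ε) v (w - w') w'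
  rw [sub_add_cancel] at h; linear_combination -h

/-- ω as a mathlib bilinear form. -/
def omB (ε : ℂ) (r d : ℕ) : LinearMap.BilinForm ℂ (Vc r d) :=
  LinearMap.mk₂ ℂ (om ε r d) om_add_left (fun c v w => by rw [om_smul_left]; rfl)
    om_add_right (fun c v w => by rw [om_smul_right]; rfl)

@[simp] lemma omB_apply (v w : Vc r d) : omB ε r d v w = om ε r d v w := rfl

lemma om_comm (hε : ε = 1 ∨ ε = -1) (hd1 : d = 1 → ε = 1) (v w : Vc r d) :
    om ε r d w v = ε * om ε r d v w := by
  unfold om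
  rcases hε with hε | hε
  · subst hε
    rw [one_mul]
    split_ifs with hd
    · congr 1
      · exact Finset.sum_congr rfl (by intro j _; ring)
      · ring
    · rw [add_zero, add_zero]
      exact Finset.sum_congr rfl (by intro j _; ring)
  · have hd0 : ¬ d = 1 := fun h => by
      have h1 := hd1 h
      rw [hε] at h1
      norm_num at h1
    subst hε
    rw [dif_neg hd0, dif_neg hd0, add_zero, add_zero, Finset.mul_sum]
    exact Finset.sum_congr rfl (by intro j _; ring)

lemma om_self_eq_zero_of_neg (hε : ε = -1) (v : Vc r d) (hd1 : d = 1 → ε = 1) :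
    om ε r d v v = 0 := by
  subst hε
  have h := om_comm (Or.inr rfl) hd1 v v
  have h2 : (2 : ℂ) * om (-1) r d v v = 0 := by linear_combination h
  have h3 : (2:ℂ) ≠ 0 := two_ne_zero
  exact (mul_eq_zero.mp h2).resolve_left h3

/-- Master computation: pairing against a standard basis vector. -/
lemma om_sv (hd01 : d = 0 ∨ d = 1) (v : Vc r d) {t : ℕ} (ht : t < 2*r+d) :
    om ε r d v (sv r d t) = (if t < r then ε else 1) * v ⟨2*r+d-1-t, by omega⟩ := by
  unfold om sv
  rcases Nat.lt_or_ge t r with hlt | hge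
  · rw [if_pos hlt]
    have hd : (if hd : d = 1 then v ⟨r, by omega⟩ * (if ((⟨r, by omega⟩ : Fin (2*r+d)) : ℕ) = t then (1:ℂ) else 0) else 0) = 0 := by
      split_ifs with hd h2
      · simp only [Fin.val_mk] at h2; omega
      · ring
      · rfl
    rw [hd, add_zero]
    rw [Finset.sum_eq_single (⟨r-1-t, by omega⟩ : Fin r)]
    · simp only [Fin.val_mk]
      rw [if_neg (by omega), if_pos (by omega)]
      rw [show (⟨r+d+(r-1-t), by omega⟩ : Fin (2*r+d)) = ⟨2*r+d-1-t, by omega⟩ from by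
        apply Fin.ext; simp only [Fin.val_mk]; omega]
      ring
    · intro j _ hj
      simp only [Fin.val_mk]
      rw [if_neg (by omega), if_neg (fun hc => hj (by apply Fin.ext; simp only [Fin.val_mk]; omega))]
      ring
    · intro h; exact absurd (Finset.mem_univ _) h
  · rw [if_neg (by omega)]
    rcases Nat.lt_or_ge t (r+d) with hmid | hhigh
    · -- t = r, d = 1
      have hd1 : d = 1 := by omega
      have htr : t = r := by omega
      rw [Finset.sum_eq_zero, zero_add, dif_pos hd1]
      · rw [if_pos (by simp only [Fin.val_mk]; omega)]
        rw [show (⟨r, by omega⟩ : Fin (2*r+d)) = ⟨2*r+d-1-t, by omega⟩ from by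
          apply Fin.ext; simp only [Fin.val_mk]; omega]
        ring
      · intro j _
        simp only [Fin.val_mk]
        rw [if_neg (by omega), if_neg (by omega)]
        ring
    · rw [Finset.sum_eq_single (⟨t-r-d, by omega⟩ : Fin r)]
      · have hd : (if hd : d = 1 then v ⟨r, by omega⟩ * (if ((⟨r, by omega⟩ : Fin (2*r+d)) : ℕ) = t then (1:ℂ) else 0) else 0) = 0 := by
          split_ifs with hd h2
          · simp only [Fin.val_mk] at h2; omega
          · ring
          · rfl
        rw [hd, add_zero]
        simp only [Fin.val_mk]
        rw [if_pos (by omega), if_neg (by omega)]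
        rw [show (⟨r-1-(t-r-d), by omega⟩ : Fin (2*r+d)) = ⟨2*r+d-1-t, by omega⟩ from by
          apply Fin.ext; simp only [Fin.val_mk]; omega]
        ring
      · intro j _ hj
        simp only [Fin.val_mk]
        rw [if_neg (fun hc => hj (by apply Fin.ext; simp only [Fin.val_mk]; omega)), if_neg (by omega)]
        ring
      · intro h; exact absurd (Finset.mem_univ _) h

lemma sv_apply (t : ℕ) (k : Fin (2*r+d)) : sv r d t k = if (k:ℕ) = t then 1 else 0 := rfl

lemma om_sv_sv (hd01 : d = 0 ∨ d = 1) {s t : ℕ} (hs : s < 2*r+d) (ht : t < 2*r+d) :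
    om ε r d (sv r d s) (sv r d t) =
      (if t < r then ε else 1) * (if 2*r+d-1-t = s then 1 else 0) := by
  rw [om_sv hd01 _ ht, sv_apply]

lemma omB_nondeg (hε : ε = 1 ∨ ε = -1) (hd01 : d = 0 ∨ d = 1) : (omB ε r d).Nondegenerate := by
  refine LinearMap.BilinForm.Nondegenerate.ofSeparatingLeft fun v hv => ?_
  funext i
  have hi := i.isLt
  have h := hv (sv r d (2*r+d-1-(i:ℕ)))
  rw [omB_apply, om_sv hd01 _ (by omega)] at h
  have hidx : (⟨2*r+d-1-(2*r+d-1-(i:ℕ)), by omega⟩ : Fin (2*r+d)) = i := by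
    apply Fin.ext; simp only [Fin.val_mk]; omega
  rw [hidx] at h
  have hcoef : (if 2*r+d-1-(i:ℕ) < r then ε else 1) ≠ 0 := by
    rcases hε with h1 | h1 <;> split_ifs <;> simp [h1]
  have := mul_eq_zero.mp h
  simp only [Pi.zero_apply]
  tauto

lemma isom_of_gram {ι : Type} [Fintype ι] [DecidableEq ι] (b b' : Basis ι ℂ (Vc r d))
    (h : ∀ i j, om ε r d (b i) (b j) = om ε r d (b' i) (b' j)) (v w : Vc r d) :
    om ε r d ((b.equiv b' (Equiv.refl ι)) v) ((b.equiv b' (Equiv.refl ι)) w) = om ε r d v w := by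
  set g := b.equiv b' (Equiv.refl ι) with hg
  have h1 : ∀ x : Vc r d, g x = ∑ i, b.repr x i • b' i := by
    intro x
    conv_lhs => rw [← b.sum_repr x]
    rw [map_sum]
    exact Finset.sum_congr rfl (fun i _ => by rw [map_smul, hg, Basis.equiv_apply, Equiv.refl_apply])
  have hsum_left : ∀ (f : ι → Vc r d) (u : Vc r d),
      om ε r d (∑ i, f i) u = ∑ i, om ε r d (f i) u := by
    intro f u
    classical
    induction (Finset.univ : Finset ι) using Finset.induction with
    | empty => simp [om_zero_left]
    | insert a s hx ih => rw [Finset.sum_insert hx, om_add_left, ih, Finset.sum_insert hx]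
  have hsum_right : ∀ (f : ι → Vc r d) (u : Vc r d),
      om ε r d u (∑ i, f i) = ∑ i, om ε r d u (f i) := by
    intro f u
    classical
    induction (Finset.univ : Finset ι) using Finset.induction with
    | empty => simp [om_zero_right]
    | insert a s hx ih => rw [Finset.sum_insert hx, om_add_right, ih, Finset.sum_insert hx]
  rw [h1 v, h1 w]
  conv_rhs => rw [← b.sum_repr v, ← b.sum_repr w]
  rw [hsum_left, hsum_left]
  refine Finset.sum_congr rfl (fun i _ => ?_)
  rw [om_smul_left, om_smul_left, hsum_right, hsum_right, Finset.mul_sum, Finset.mul_sum]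
  refine Finset.sum_congr rfl (fun j _ => ?_)
  rw [om_smul_right, om_smul_right, h i j]

end Aux
section AuxB
open Module Submodule LinearMap

/-- Gram pattern of a standard symplectic basis. -/
def Jpat (i j : ℕ) : ℂ :=
  if j = i+1 ∧ Even i then 1 else if i = j+1 ∧ Even j then -1 else 0

/-- Gram pattern for the complement basis. -/
def CU (ε : ℂ) (k l : ℕ) : ℂ :=
  if ε = -1 then Jpat k l else (if k = l then (if k = 0 then -2 else 1) else 0)

/-- Canonical Gram matrix for the bases extending normalized triples. -/
def CC (ε : ℂ) (i j : ℕ) : ℂ :=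
  if i < 2 ∧ j < 2 then (if i = j then 0 else if i = 0 then 1 else ε)
  else if 2 ≤ i ∧ 2 ≤ j then CU ε (i-2) (j-2) else 0

variable {V : Type} [AddCommGroup V] [Module ℂ V] [FiniteDimensional ℂ V]

lemma restrict_orthogonal_nondeg (B : LinearMap.BilinForm ℂ V) (hrefl : B.IsRefl)
    (hnd : B.Nondegenerate) (W : Submodule ℂ V) (hW : (B.restrict W).Nondegenerate) :
    (B.restrict (B.orthogonal W)).Nondegenerate := by
  have hc := B.isCompl_orthogonal_of_restrict_nondegenerate hrefl hW
  refine LinearMap.BilinForm.Nondegenerate.ofSeparatingLeft fun z hz => ?_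
  have hzV : ∀ y : V, B (z : V) y = 0 := by
    intro y
    have hy : y ∈ W ⊔ B.orthogonal W := by rw [hc.sup_eq_top]; trivial
    obtain ⟨w, hw, u, hu, rfl⟩ := Submodule.mem_sup.mp hy
    have h1 : B (z : V) w = 0 := hrefl w z (z.2 w hw)
    have h2 : B (z : V) u = 0 := by simpa using hz ⟨u, hu⟩
    rw [map_add, h1, h2, add_zero]
  exact Subtype.ext (hnd.1 z hzV)

lemma combine_basis (B : LinearMap.BilinForm ℂ V) (hrefl : B.IsRefl) (W : Submodule ℂ V)
    (hW : (B.restrict W).Nondegenerate)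
    {a c n : ℕ} (bW : Basis (Fin a) ℂ W) (bU : Basis (Fin c) ℂ (B.orthogonal W))
    (hn : a + c = n) :
    ∃ b : Basis (Fin n) ℂ V,
      (∀ (i : Fin n) (h : (i : ℕ) < a), b i = (bW ⟨(i : ℕ), h⟩ : V)) ∧
      (∀ (i : Fin n) (h : a ≤ (i : ℕ)), b i = (bU ⟨(i : ℕ) - a, by omega⟩ : V)) := by
  have hc := B.isCompl_orthogonal_of_restrict_nondegenerate hrefl hW
  set e : Fin a ⊕ Fin c ≃ Fin n := finSumFinEquiv.trans (finCongr hn) with he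
  refine ⟨((bW.prod bU).map (Submodule.prodEquivOfIsCompl _ _ hc)).reindex e, ?_, ?_⟩
  · intro i h
    have hsymm : e.symm i = Sum.inl ⟨(i : ℕ), h⟩ := by
      rw [Equiv.symm_apply_eq, he]
      apply Fin.ext
      simp
    rw [Basis.reindex_apply, hsymm, Basis.map_apply]
    have h2 : (bW.prod bU) (Sum.inl ⟨(i : ℕ), h⟩) = (bW ⟨(i : ℕ), h⟩, 0) :=
      Prod.ext (by simp) (by simp)
    rw [h2, Submodule.coe_prodEquivOfIsCompl']
    simp
  · intro i h
    have hsymm : e.symm i = Sum.inr ⟨(i : ℕ) - a, by omega⟩ := by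
      rw [Equiv.symm_apply_eq, he]
      apply Fin.ext
      simp
      omega
    rw [Basis.reindex_apply, hsymm, Basis.map_apply]
    have h2 : (bW.prod bU) (Sum.inr ⟨(i : ℕ) - a, by omega⟩) =
        (0, bU ⟨(i : ℕ) - a, by omega⟩) :=
      Prod.ext (by simp) (by simp)
    rw [h2, Submodule.coe_prodEquivOfIsCompl']
    simp

lemma pair_li (B : LinearMap.BilinForm ℂ V) {x y : V}
    (hxy : B x y = 1) (hyy : B y y = 0) : LinearIndependent ℂ ![x, y] := by
  rw [linearIndependent_fin2]
  refine ⟨fun h => ?_, fun a h => ?_⟩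
  · simp only [Matrix.cons_val_one, Matrix.head_cons, Matrix.cons_val_zero] at h
    rw [h, map_zero] at hxy
    exact one_ne_zero hxy.symm
  · simp only [Matrix.cons_val_one, Matrix.head_cons, Matrix.cons_val_zero] at h
    rw [← h, map_smul, LinearMap.smul_apply, smul_eq_mul, hyy, mul_zero] at hxy
    exact one_ne_zero hxy.symm

lemma pair_restrict_nondeg (B : LinearMap.BilinForm ℂ V) {x y : V} {c : ℂ} (hc : c ≠ 0)
    (hxx : B x x = 0) (hxy : B x y = 1) (hyx : B y x = c) (hyy : B y y = 0) :
    (B.restrict (span ℂ (Set.range ![x, y]))).Nondegenerate := by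
  refine LinearMap.BilinForm.Nondegenerate.ofSeparatingLeft fun z hz => ?_
  have hzmem := z.2
  rw [mem_span_range_iff_exists_fun ℂ] at hzmem
  obtain ⟨cf, hcf⟩ := hzmem
  rw [Fin.sum_univ_two] at hcf
  simp only [Matrix.cons_val_zero, Matrix.cons_val_one, Matrix.head_cons] at hcf
  have hx : x ∈ span ℂ (Set.range ![x, y]) := subset_span ⟨0, rfl⟩
  have hy : y ∈ span ℂ (Set.range ![x, y]) := subset_span ⟨1, rfl⟩
  have h1 : B (z : V) x = 0 := by simpa using hz ⟨x, hx⟩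
  have h2 : B (z : V) y = 0 := by simpa using hz ⟨y, hy⟩
  rw [← hcf] at h1 h2
  rw [map_add, map_smul, map_smul, LinearMap.add_apply, LinearMap.smul_apply,
    LinearMap.smul_apply, hxx, hyx, smul_eq_mul, smul_eq_mul, mul_zero, zero_add] at h1
  rw [map_add, map_smul, map_smul, LinearMap.add_apply, LinearMap.smul_apply,
    LinearMap.smul_apply, hxy, hyy, smul_eq_mul, smul_eq_mul, mul_zero, add_zero] at h2
  have hcf1 : cf 1 = 0 := by
    have := mul_eq_zero.mp h1
    tauto
  have hcf0 : cf 0 = 0 := by rwa [mul_one] at h2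
  apply Subtype.ext
  rw [← hcf, hcf0, hcf1]
  simp

lemma ne_zero_of_form_ne_zero {B : LinearMap.BilinForm ℂ V} {x y : V} (h : B x y ≠ 0) : x ≠ 0 := by
  intro hx
  rw [hx, map_zero] at h
  exact h (by rfl)

/-- Existence of a symplectic basis with prescribed first vector. -/
lemma symp_basis (n : ℕ) :
    ∀ (V : Type) [AddCommGroup V] [Module ℂ V] [FiniteDimensional ℂ V]
      (B : LinearMap.BilinForm ℂ V), (∀ u, B u u = 0) → B.Nondegenerate →
      Module.finrank ℂ V = n → ∀ x : V, x ≠ 0 →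
      ∃ b : Basis (Fin n) ℂ V, (∀ h0 : 0 < n, b ⟨0, h0⟩ = x) ∧
        ∀ i j : Fin n, B (b i) (b j) = Jpat (i : ℕ) (j : ℕ) := by
  induction n using Nat.strong_induction_on with
  | _ n ih =>
    intro V _ _ _ B halt hnd hfr x hx
    have hskew : ∀ u v : V, B v u = - B u v := by
      intro u v
      have h := halt (u + v)
      simp only [map_add, LinearMap.add_apply, halt u, halt v] at h
      linear_combination h
    have hrefl : B.IsRefl := by
      intro u v h
      rw [hskew u v, h, neg_zero]
    -- find y with B x y = 1
    have hy : ∃ y, B x y ≠ 0 := by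
      by_contra h
      push_neg at h
      exact hx (hnd.1 x h)
    obtain ⟨y0, hy0⟩ := hy
    set y : V := (B x y0)⁻¹ • y0 with hydef
    have hxy : B x y = 1 := by
      rw [hydef, map_smul, smul_eq_mul, inv_mul_cancel₀ hy0]
    have hyx : B y x = -1 := by rw [hskew x y, hxy]
    have hli : LinearIndependent ℂ ![x, y] := pair_li B hxy (halt y)
    set W : Submodule ℂ V := span ℂ (Set.range ![x, y]) with hW
    have hWnd : (B.restrict W).Nondegenerate :=
      pair_restrict_nondeg B (c := -1) (by norm_num) (halt x) hxy hyx (halt y)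
    have hUnd := restrict_orthogonal_nondeg B hrefl hnd W hWnd
    have hcompl := B.isCompl_orthogonal_of_restrict_nondegenerate hrefl hWnd
    have hfrW : finrank ℂ W = 2 := by
      rw [hW, finrank_span_eq_card hli]
      simp
    have hfrsum := Submodule.finrank_add_eq_of_isCompl hcompl
    rw [hfrW, hfr] at hfrsum
    have h2n : 2 ≤ n := by omega
    have hfrU : finrank ℂ (B.orthogonal W) = n - 2 := by omega
    obtain ⟨bU, hbU⟩ : ∃ bU : Basis (Fin (n-2)) ℂ (B.orthogonal W),
        ∀ k l : Fin (n-2), B (bU k : V) (bU l : V) = Jpat (k : ℕ) (l : ℕ) := by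
      rcases Nat.eq_zero_or_pos (n - 2) with h0 | hpos
      · refine ⟨(basisOfFinrankZero (ι := Fin 0) (by omega)).reindex (finCongr h0.symm), fun k l => ?_⟩
        exact absurd k.isLt (by omega)
      · have hnt : Nontrivial ↥(B.orthogonal W) := by
          apply Module.nontrivial_of_finrank_pos (R := ℂ)
          omega
        obtain ⟨x', hx'⟩ := exists_ne (0 : ↥(B.orthogonal W))
        obtain ⟨bU, _, hbU⟩ := ih (n - 2) (by omega) ↥(B.orthogonal W) (B.restrict (B.orthogonal W))
          (fun u => halt u) hUnd hfrU x' hx'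
        exact ⟨bU, fun k l => hbU k l⟩
    obtain ⟨b, hb1, hb2⟩ := combine_basis B hrefl W hWnd (Basis.span hli) bU (by omega : 2 + (n - 2) = n)
    have hbx : ∀ (i : Fin n), (i : ℕ) = 0 → b i = x := by
      intro i hi
      rw [hb1 i (by omega)]
      have : (⟨(i : ℕ), by omega⟩ : Fin 2) = ⟨0, by omega⟩ := by apply Fin.ext; simp [hi]
      rw [this, Basis.span_apply]
      rfl
    have hby : ∀ (i : Fin n), (i : ℕ) = 1 → b i = y := by
      intro i hi
      rw [hb1 i (by omega)]
      have : (⟨(i : ℕ), by omega⟩ : Fin 2) = ⟨1, by omega⟩ := by apply Fin.ext; simp [hi]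
      rw [this, Basis.span_apply]
      rfl
    refine ⟨b, fun h0 => hbx ⟨0, h0⟩ rfl, ?_⟩
    intro i j
    have horth : ∀ (m : V), m ∈ W → ∀ (u : ↥(B.orthogonal W)), B m (u : V) = 0 ∧ B (u : V) m = 0 := by
      intro m hm u
      have h1 : B m (u : V) = 0 := u.2 m hm
      exact ⟨h1, by rw [hskew]; rw [h1, neg_zero]⟩
    have hxW : x ∈ W := subset_span ⟨0, rfl⟩
    have hyW : y ∈ W := subset_span ⟨1, rfl⟩
    rcases Nat.lt_or_ge (i : ℕ) 2 with hi | hi <;> rcases Nat.lt_or_ge (j : ℕ) 2 with hj | hj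
    · have hi' : (i : ℕ) = 0 ∨ (i : ℕ) = 1 := by omega
      have hj' : (j : ℕ) = 0 ∨ (j : ℕ) = 1 := by omega
      rcases hi' with hi' | hi' <;> rcases hj' with hj' | hj'
      · rw [hbx i hi', hbx j hj', halt x]
        simp [Jpat, hi', hj']
      · rw [hbx i hi', hby j hj', hxy]
        simp [Jpat, hi', hj']
      · rw [hby i hi', hbx j hj', hyx]
        simp [Jpat, hi', hj']
      · rw [hby i hi', hby j hj', halt y]
        simp [Jpat, hi', hj']
    · -- i in pair, j in U
      have hbj := hb2 j hj
      have hmem : b i ∈ W := by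
        have hi' : (i : ℕ) = 0 ∨ (i : ℕ) = 1 := by omega
        rcases hi' with hi' | hi'
        · rw [hbx i hi']; exact hxW
        · rw [hby i hi']; exact hyW
      rw [hbj, (horth (b i) hmem _).1]
      simp only [Jpat, Nat.even_iff]
      split_ifs <;> first | rfl | (exfalso; omega)
    · have hbi := hb2 i hi
      have hmem : b j ∈ W := by
        have hj' : (j : ℕ) = 0 ∨ (j : ℕ) = 1 := by omega
        rcases hj' with hj' | hj'
        · rw [hbx j hj']; exact hxW
        · rw [hby j hj']; exact hyW
      rw [hbi, (horth (b j) hmem _).2]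
      simp only [Jpat, Nat.even_iff]
      split_ifs <;> first | rfl | (exfalso; omega)
    · rw [hb2 i hi, hb2 j hj, hbU]
      simp only [Jpat, Nat.even_iff]
      split_ifs <;> first | rfl | (exfalso; omega)

end AuxB
section AuxC
open Module Submodule LinearMap

lemma orthonormal_c (m : ℕ) (V : Type) [AddCommGroup V] [Module ℂ V] [FiniteDimensional ℂ V]
    (B : LinearMap.BilinForm ℂ V) (hsymm : ∀ u v, B u v = B v u) (hnd : B.Nondegenerate)
    (hfr : Module.finrank ℂ V = m) :
    ∃ b : Basis (Fin m) ℂ V, ∀ i j : Fin m, B (b i) (b j) = if i = j then 1 else 0 := by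
  haveI : Invertible (2 : ℂ) := invertibleOfNonzero two_ne_zero
  have hsymm' : B.IsSymm := ⟨fun u w => by simpa using hsymm u w⟩
  obtain ⟨v0, hv0⟩ := LinearMap.BilinForm.exists_orthogonal_basis (LinearMap.BilinForm.isSymm_iff.mp hsymm')
  set v : Basis (Fin m) ℂ V := v0.reindex (finCongr (by rw [hfr])) with hv
  have hvo : ∀ i j : Fin m, i ≠ j → B (v i) (v j) = 0 := by
    intro i j hij
    rw [hv, Basis.reindex_apply, Basis.reindex_apply]
    exact hv0 fun hc => hij (Equiv.injective _ hc)
  have hdiag : ∀ i : Fin m, B (v i) (v i) ≠ 0 := by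
    intro i h0
    have hzero : B (v i) = 0 := by
      apply Basis.ext v
      intro j
      rcases eq_or_ne i j with rfl | hij
      · simpa using h0
      · simpa using hvo i j hij
    exact v.ne_zero i (hnd.1 (v i) (fun w => by rw [hzero]; rfl))
  have hs : ∀ i : Fin m, ∃ s : ℂ, s ≠ 0 ∧ s * s * B (v i) (v i) = 1 := by
    intro i
    obtain ⟨z, hz⟩ := IsAlgClosed.exists_pow_nat_eq (B (v i) (v i))⁻¹ (n := 2) (by norm_num)
    have hz2 : z * z = (B (v i) (v i))⁻¹ := by rw [← hz]; ring
    refine ⟨z, ?_, ?_⟩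
    · intro h0
      rw [h0, mul_zero] at hz2
      exact hdiag i (by rwa [eq_comm, inv_eq_zero] at hz2)
    · rw [hz2, inv_mul_cancel₀ (hdiag i)]
  choose s hs0 hs1 using hs
  have hBs : ∀ (a b : ℂ) (u w : V), B (a • u) (b • w) = a * b * B u w := by
    intros a b u w
    simp only [map_smul, LinearMap.smul_apply, smul_eq_mul]
    ring
  refine ⟨v.unitsSMul (fun i => Units.mk0 (s i) (hs0 i)), ?_⟩
  intro i j
  rw [Basis.unitsSMul_apply, Basis.unitsSMul_apply, Units.smul_def, Units.smul_def]
  simp only [Units.val_mk0]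
  rw [hBs]
  rcases eq_or_ne i j with rfl | hij
  · rw [if_pos rfl, hs1]
  · rw [if_neg hij, hvo i j hij, mul_zero]

lemma diag_basis (m : ℕ) (V : Type) [AddCommGroup V] [Module ℂ V] [FiniteDimensional ℂ V]
    (B : LinearMap.BilinForm ℂ V) (hsymm : ∀ u v, B u v = B v u) (hnd : B.Nondegenerate)
    (hfr : Module.finrank ℂ V = m) (x : V) (hxx : B x x = -2) :
    ∃ b : Basis (Fin m) ℂ V, (∀ h0 : 0 < m, b ⟨0, h0⟩ = x) ∧
      ∀ i j : Fin m, B (b i) (b j) = CU 1 (i : ℕ) (j : ℕ) := by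
  have hrefl : B.IsRefl := fun u v h => by rw [hsymm v u]; exact h
  have hx : x ≠ 0 := by
    intro h
    rw [h] at hxx
    simp only [map_zero, LinearMap.zero_apply] at hxx
    norm_num at hxx
  have hli : LinearIndependent ℂ ![x] := linearIndependent_unique_iff.mpr (by simpa using hx)
  set W : Submodule ℂ V := span ℂ (Set.range ![x]) with hW
  have hxW : x ∈ W := subset_span ⟨0, rfl⟩
  have hWnd : (B.restrict W).Nondegenerate := by
    refine LinearMap.BilinForm.Nondegenerate.ofSeparatingLeft fun z hz => ?_
    have hzmem : (z : V) ∈ span ℂ (Set.range ![x]) := z.2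
    rw [mem_span_range_iff_exists_fun ℂ] at hzmem
    obtain ⟨cf, hcf⟩ := hzmem
    rw [Fin.sum_univ_one] at hcf
    simp only [Matrix.cons_val_zero] at hcf
    have h1 : B (z : V) x = 0 := by simpa using hz ⟨x, hxW⟩
    rw [← hcf, map_smul, LinearMap.smul_apply, smul_eq_mul, hxx] at h1
    have hc0 : cf 0 = 0 := by
      rcases mul_eq_zero.mp h1 with h | h
      · exact h
      · norm_num at h
    apply Subtype.ext
    rw [← hcf, hc0, zero_smul]
    simp
  have hUnd := restrict_orthogonal_nondeg B hrefl hnd W hWnd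
  have hcompl := B.isCompl_orthogonal_of_restrict_nondegenerate hrefl hWnd
  have hfrW : finrank ℂ W = 1 := by
    rw [hW, finrank_span_eq_card hli]
    simp
  have hfrsum := Submodule.finrank_add_eq_of_isCompl hcompl
  rw [hfrW, hfr] at hfrsum
  obtain ⟨bU, hbU⟩ : ∃ bU : Basis (Fin (m-1)) ℂ ↥(B.orthogonal W),
      ∀ k l : Fin (m-1), B (bU k : V) (bU l : V) = if k = l then (1:ℂ) else 0 := by
    obtain ⟨bU, h⟩ := orthonormal_c (m - 1) ↥(B.orthogonal W) (B.restrict (B.orthogonal W))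
      (fun u v => hsymm (u : V) (v : V)) hUnd (by omega)
    exact ⟨bU, fun k l => h k l⟩
  obtain ⟨b, hb1, hb2⟩ := combine_basis B hrefl W hWnd (Basis.span hli) bU
    (by omega : 1 + (m - 1) = m)
  have hbx : ∀ (i : Fin m), (i : ℕ) = 0 → b i = x := by
    intro i hi
    rw [hb1 i (by omega)]
    have h2 : (⟨(i : ℕ), by omega⟩ : Fin 1) = ⟨0, by omega⟩ := Fin.ext (by simp [hi])
    rw [h2, Basis.span_apply]
    rfl
  have horth : ∀ (u : ↥(B.orthogonal W)), B x (u : V) = 0 ∧ B (u : V) x = 0 := by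
    intro u
    have h1 : B x (u : V) = 0 := u.2 x hxW
    exact ⟨h1, by rw [hsymm]; exact h1⟩
  refine ⟨b, fun h0 => hbx ⟨0, h0⟩ rfl, ?_⟩
  intro i j
  have h1ne : ¬ (1 : ℂ) = -1 := by norm_num
  rcases Nat.lt_or_ge (i : ℕ) 1 with hi | hi <;> rcases Nat.lt_or_ge (j : ℕ) 1 with hj | hj
  · rw [hbx i (by omega), hbx j (by omega), hxx]
    simp only [CU]
    rw [if_neg h1ne, if_pos (by omega), if_pos (by omega)]
  · rw [hbx i (by omega), hb2 j hj, (horth _).1]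
    simp only [CU]
    rw [if_neg h1ne, if_neg (by omega)]
  · rw [hbx j (by omega), hb2 i hi, (horth _).2]
    simp only [CU]
    rw [if_neg h1ne, if_neg (by omega)]
  · rw [hb2 i hi, hb2 j hj, hbU]
    simp only [CU]
    rw [if_neg h1ne]
    rcases eq_or_ne ((i:ℕ) - 1) ((j:ℕ) - 1) with he | he
    · rw [if_pos (by apply Fin.ext; simp [he]), if_pos (by omega), if_neg (by omega)]
    · rw [if_neg (fun hc => he (by simpa using congrArg Fin.val hc)), if_neg (by omega)]

end AuxC
section AuxD
open Module Submodule LinearMap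

variable {r d : ℕ} {ε : ℂ}

lemma triple_basis (hε : ε = 1 ∨ ε = -1) (hd1 : d = 1 → ε = 1)
    (hd01 : d = 0 ∨ d = 1) (hn3 : 3 ≤ 2*r+d)
    (u0 u1 u2 : Vc r d)
    (h00 : om ε r d u0 u0 = 0) (h11 : om ε r d u1 u1 = 0) (h22 : om ε r d u2 u2 = 0)
    (h01 : om ε r d u0 u1 = 1) (h02 : om ε r d u0 u2 = 1) (h12 : om ε r d u1 u2 = ε)
    (hw : u2 - u0 - u1 ≠ 0) :
    ∃ b : Basis (Fin (2*r+d)) ℂ (Vc r d),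
      b ⟨0, by omega⟩ = u0 ∧ b ⟨1, by omega⟩ = u1 ∧ b ⟨2, by omega⟩ = u2 - u0 - u1 ∧
      ∀ i j : Fin (2*r+d), om ε r d (b i) (b j) = CC ε (i : ℕ) (j : ℕ) := by
  set B := omB ε r d with hBdef
  have homB : ∀ v w : Vc r d, B v w = om ε r d v w := fun _ _ => rfl
  have hcomm := om_comm (r := r) (d := d) hε hd1
  have hε2 : ε * ε = 1 := by rcases hε with h | h <;> rw [h] <;> norm_num
  have hε0 : ε ≠ 0 := by rcases hε with h | h <;> simp [h]
  have hrefl : B.IsRefl := by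
    intro v w h
    rw [homB] at h ⊢
    rw [hcomm v w, h, mul_zero]
  have hnd : B.Nondegenerate := omB_nondeg hε hd01
  have h10 : om ε r d u1 u0 = ε := by rw [hcomm u0 u1, h01, mul_one]
  have h20 : om ε r d u2 u0 = ε := by rw [hcomm u0 u2, h02, mul_one]
  have h21 : om ε r d u2 u1 = 1 := by rw [hcomm u1 u2, h12, hε2]
  have hli : LinearIndependent ℂ ![u0, u1] :=
    pair_li B (x := u0) (y := u1) (by rw [homB]; exact h01) (by rw [homB]; exact h11)
  set W : Submodule ℂ (Vc r d) := span ℂ (Set.range ![u0, u1]) with hWdef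
  have hu0W : u0 ∈ W := subset_span ⟨0, rfl⟩
  have hu1W : u1 ∈ W := subset_span ⟨1, rfl⟩
  have hWnd : (B.restrict W).Nondegenerate :=
    pair_restrict_nondeg B (c := ε) hε0 (by rw [homB]; exact h00) (by rw [homB]; exact h01)
      (by rw [homB]; exact h10) (by rw [homB]; exact h11)
  have hUnd := restrict_orthogonal_nondeg B hrefl hnd W hWnd
  have hcompl := B.isCompl_orthogonal_of_restrict_nondegenerate hrefl hWnd
  have hfrW : finrank ℂ W = 2 := by
    rw [hWdef, finrank_span_eq_card hli]
    simp
  have hfrV : finrank ℂ (Vc r d) = 2*r+d := Module.finrank_fin_fun ℂ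
  have hfrsum := Submodule.finrank_add_eq_of_isCompl hcompl
  rw [hfrW, hfrV] at hfrsum
  have hfrU : finrank ℂ ↥(B.orthogonal W) = 2*r+d-2 := by omega
  set w : Vc r d := u2 - u0 - u1 with hwdef
  have h0w : om ε r d u0 w = 0 := by
    rw [hwdef, om_sub_right, om_sub_right, h02, h00, h01]
    ring
  have h1w : om ε r d u1 w = 0 := by
    rw [hwdef, om_sub_right, om_sub_right, h12, h10, h11]
    ring
  have hwU : w ∈ B.orthogonal W := by
    rw [LinearMap.BilinForm.mem_orthogonal_iff]
    intro n hn
    rw [hWdef, mem_span_range_iff_exists_fun ℂ] at hn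
    obtain ⟨cf, hcf⟩ := hn
    rw [Fin.sum_univ_two] at hcf
    simp only [Matrix.cons_val_zero, Matrix.cons_val_one, Matrix.head_cons] at hcf
    show B n w = 0
    rw [← hcf, homB, om_add_left, om_smul_left, om_smul_left, h0w, h1w]
    ring
  have hww : om ε r d w w = -ε - 1 := by
    simp only [hwdef, om_sub_left, om_sub_right]
    rw [h22, h20, h21, h02, h00, h01, h12, h10, h11]
    ring
  have hwne : (⟨w, hwU⟩ : ↥(B.orthogonal W)) ≠ 0 := by
    intro h
    exact hw (by simpa using congrArg Subtype.val h)
  obtain ⟨bU, hbU0, hbU⟩ : ∃ bU : Basis (Fin (2*r+d-2)) ℂ ↥(B.orthogonal W),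
      (∀ h0 : 0 < 2*r+d-2, bU ⟨0, h0⟩ = ⟨w, hwU⟩) ∧
      ∀ k l : Fin (2*r+d-2), om ε r d (bU k : Vc r d) (bU l : Vc r d) = CU ε (k : ℕ) (l : ℕ) := by
    rcases hε with hε1 | hεm
    · obtain ⟨bU, hb0, hG⟩ := diag_basis (2*r+d-2) ↥(B.orthogonal W)
        (B.restrict (B.orthogonal W))
        (fun u v => by
          show om ε r d (u : Vc r d) (v : Vc r d) = om ε r d (v : Vc r d) (u : Vc r d)
          rw [hcomm (u : Vc r d) (v : Vc r d), hε1, one_mul])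
        hUnd hfrU ⟨w, hwU⟩ (by show om ε r d w w = -2; rw [hww, hε1]; norm_num)
      refine ⟨bU, hb0, fun k l => ?_⟩
      have hG' := hG k l
      rw [show ((B.restrict (B.orthogonal W)) (bU k)) (bU l)
          = om ε r d (bU k : Vc r d) (bU l : Vc r d) from rfl] at hG'
      rw [hG', hε1]
    · obtain ⟨bU, hb0, hG⟩ := symp_basis (2*r+d-2) ↥(B.orthogonal W)
        (B.restrict (B.orthogonal W))
        (fun u => by
          show om ε r d (u : Vc r d) (u : Vc r d) = 0
          exact om_self_eq_zero_of_neg hεm _ hd1)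
        hUnd hfrU ⟨w, hwU⟩ hwne
      refine ⟨bU, hb0, fun k l => ?_⟩
      have hG' := hG k l
      rw [show ((B.restrict (B.orthogonal W)) (bU k)) (bU l)
          = om ε r d (bU k : Vc r d) (bU l : Vc r d) from rfl] at hG'
      rw [hG', CU, if_pos hεm]
  obtain ⟨b, hb1, hb2⟩ := combine_basis B hrefl W hWnd (Basis.span hli) bU
    (by omega : 2 + (2*r+d-2) = 2*r+d)
  have hbu0 : ∀ (i : Fin (2*r+d)), (i : ℕ) = 0 → b i = u0 := by
    intro i hi
    rw [hb1 i (by omega)]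
    have h2 : (⟨(i : ℕ), by omega⟩ : Fin 2) = ⟨0, by omega⟩ := Fin.ext (by simp [hi])
    rw [h2, Basis.span_apply]
    rfl
  have hbu1 : ∀ (i : Fin (2*r+d)), (i : ℕ) = 1 → b i = u1 := by
    intro i hi
    rw [hb1 i (by omega)]
    have h2 : (⟨(i : ℕ), by omega⟩ : Fin 2) = ⟨1, by omega⟩ := Fin.ext (by simp [hi])
    rw [h2, Basis.span_apply]
    rfl
  have hbw : ∀ (i : Fin (2*r+d)), (i : ℕ) = 2 → b i = w := by
    intro i hi
    rw [hb2 i (by omega)]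
    have h2 : (⟨(i : ℕ) - 2, by omega⟩ : Fin (2*r+d-2)) = ⟨0, by omega⟩ := Fin.ext (by simp [hi])
    rw [h2, hbU0 (by omega)]
  have horth : ∀ (m : Vc r d), m ∈ W → ∀ (u : ↥(B.orthogonal W)),
      om ε r d m (u : Vc r d) = 0 ∧ om ε r d (u : Vc r d) m = 0 := by
    intro m hm u
    have h1 : B m (u : Vc r d) = 0 := u.2 m hm
    rw [homB] at h1
    refine ⟨h1, ?_⟩
    rw [hcomm m (u : Vc r d), h1, mul_zero]
  refine ⟨b, hbu0 _ rfl, hbu1 _ rfl, hbw _ rfl, ?_⟩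
  intro i j
  rcases Nat.lt_or_ge (i : ℕ) 2 with hi | hi <;> rcases Nat.lt_or_ge (j : ℕ) 2 with hj | hj
  · have hi' : (i : ℕ) = 0 ∨ (i : ℕ) = 1 := by omega
    have hj' : (j : ℕ) = 0 ∨ (j : ℕ) = 1 := by omega
    rcases hi' with hi' | hi' <;> rcases hj' with hj' | hj' <;>
      simp only [CC, hi', hj']
    · rw [hbu0 i hi', hbu0 j hj', h00]
      norm_num
    · rw [hbu0 i hi', hbu1 j hj', h01]
      norm_num
    · rw [hbu1 i hi', hbu0 j hj', h10]
      norm_num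
    · rw [hbu1 i hi', hbu1 j hj', h11]
      norm_num
  · have hmem : b i ∈ W := by
      rcases (by omega : (i : ℕ) = 0 ∨ (i : ℕ) = 1) with hi' | hi'
      · rw [hbu0 i hi']; exact hu0W
      · rw [hbu1 i hi']; exact hu1W
    rw [hb2 j hj, (horth (b i) hmem _).1]
    simp only [CC]
    rw [if_neg (by omega), if_neg (by omega)]
  · have hmem : b j ∈ W := by
      rcases (by omega : (j : ℕ) = 0 ∨ (j : ℕ) = 1) with hj' | hj'
      · rw [hbu0 j hj']; exact hu0W
      · rw [hbu1 j hj']; exact hu1W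
    rw [hb2 i hi, (horth (b j) hmem _).2]
    simp only [CC]
    rw [if_neg (by omega), if_neg (by omega)]
  · rw [hb2 i hi, hb2 j hj, hbU]
    simp only [CC]
    rw [if_neg (by omega), if_pos (by omega)]

end AuxD

/-- For `(ε,d) ∈ {(1,1),(−1,0),(1,0)}` and `r ≥ r₁`, with
`x₀` and `φ₂ = e_r + f_r + x₀` as specified (an isotropic vector), the group `G_r` acts
transitively on generic triples of isotropic lines: any triple of pairwise non-orthogonal,
linearly independent isotropic lines can be moved to `([e_r],[f_r],[φ₂])`. -/
theorem statement_0 (ε : ℂ) (d : ℕ)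
    (hεd : (ε = 1 ∧ d = 1) ∨ (ε = -1 ∧ d = 0) ∨ (ε = 1 ∧ d = 0))
    (r : ℕ) (hr1 : 1 ≤ r) (hr2 : ε = 1 ∧ d = 0 → 2 ≤ r)
    (x0 : Vc r d)
    (hx0a : ε = -1 ∧ d = 0 ∧ r = 1 → x0 = 0)
    (hx0b : ε = 1 ∧ d = 1 ∧ r = 1 → x0 = (Complex.I * (Real.sqrt 2 : ℂ)) • hV r d)
    (hx0c : ¬(ε = -1 ∧ d = 0 ∧ r = 1) → ¬(ε = 1 ∧ d = 1 ∧ r = 1) →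
      x0 = eV r d (r - 1) - fV r d (r - 1))
    (φ2 : Vc r d) (hφ2 : φ2 = eV r d r + fV r d r + x0) :
    IsoV ε r d φ2 ∧
    ∀ v0 v1 v2 : Vc r d,
      IsoV ε r d v0 → IsoV ε r d v1 → IsoV ε r d v2 →
      om ε r d v0 v1 ≠ 0 → om ε r d v0 v2 ≠ 0 → om ε r d v1 v2 ≠ 0 →
      LinearIndependent ℂ ![v0, v1, v2] →
      ∃ g : Vc r d ≃ₗ[ℂ] Vc r d, InG ε r d g ∧
        (∃ c0 : ℂ, c0 ≠ 0 ∧ g v0 = c0 • eV r d r) ∧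
        (∃ c1 : ℂ, c1 ≠ 0 ∧ g v1 = c1 • fV r d r) ∧
        (∃ c2 : ℂ, c2 ≠ 0 ∧ g v2 = c2 • φ2) := by
  have hε : ε = 1 ∨ ε = -1 := by
    rcases hεd with ⟨h, -⟩ | ⟨h, -⟩ | ⟨h, -⟩
    exacts [Or.inl h, Or.inr h, Or.inl h]
  have hd01 : d = 0 ∨ d = 1 := by
    rcases hεd with ⟨-, h⟩ | ⟨-, h⟩ | ⟨-, h⟩
    exacts [Or.inr h, Or.inl h, Or.inl h]
  have hd1 : d = 1 → ε = 1 := by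
    intro h
    rcases hεd with ⟨h1, -⟩ | ⟨-, h0⟩ | ⟨h1, -⟩
    exacts [h1, by omega, h1]
  have hε2 : ε * ε = 1 := by rcases hε with h | h <;> rw [h] <;> norm_num
  have hε0 : ε ≠ 0 := by rcases hε with h | h <;> simp [h]
  have hcomm := om_comm (r := r) (d := d) hε hd1
  have hn2 : 2 ≤ 2*r+d := by omega
  have hEdef : eV r d r = sv r d 0 := by
    funext k; unfold eV sv; rw [Nat.sub_self]
  have hFdef : fV r d r = sv r d (2*r+d-1) := by
    funext k; unfold fV sv; rw [show r+d+r-1 = 2*r+d-1 from by omega]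
  have hEE : om ε r d (eV r d r) (eV r d r) = 0 := by
    rw [hEdef, om_sv_sv hd01 (by omega) (by omega), if_pos (by omega), if_neg (by omega), mul_zero]
  have hFF : om ε r d (fV r d r) (fV r d r) = 0 := by
    rw [hFdef, om_sv_sv hd01 (by omega) (by omega), if_neg (by omega), if_neg (by omega), mul_zero]
  have hEF : om ε r d (eV r d r) (fV r d r) = 1 := by
    rw [hEdef, hFdef, om_sv_sv hd01 (by omega) (by omega), if_neg (by omega), if_pos (by omega)]
    norm_num
  have hFE : om ε r d (fV r d r) (eV r d r) = ε := by
    rw [hFdef, hEdef, om_sv_sv hd01 (by omega) (by omega), if_pos (by omega),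
      if_pos (by omega), mul_one]
  -- facts about x0
  have hx0f : om ε r d (eV r d r) x0 = 0 ∧ om ε r d (fV r d r) x0 = 0 ∧
      om ε r d x0 x0 = -1 - ε ∧ (¬(ε = -1 ∧ d = 0 ∧ r = 1) → x0 ≠ 0) ∧
      x0 ⟨0, by omega⟩ = 0 := by
    by_cases hA : ε = -1 ∧ d = 0 ∧ r = 1
    · rw [hx0a hA]
      refine ⟨om_zero_right _, om_zero_right _, ?_, fun hc => absurd hA hc, rfl⟩
      rw [om_zero_right, hA.1]
      ring
    · by_cases hB : ε = 1 ∧ d = 1 ∧ r = 1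
      · rw [hx0b hB]
        obtain ⟨hBε, hBd, hBr⟩ := hB
        have hhV : hV r d = sv r d r := rfl
        have hc2 : (Complex.I * (Real.sqrt 2 : ℂ)) * (Complex.I * (Real.sqrt 2 : ℂ)) = -2 := by
          have hs2 : ((Real.sqrt 2 : ℝ) : ℂ) * ((Real.sqrt 2 : ℝ) : ℂ) = 2 := by
            rw [← Complex.ofReal_mul, Real.mul_self_sqrt (by norm_num)]
            norm_num
          rw [show Complex.I * (Real.sqrt 2 : ℂ) * (Complex.I * (Real.sqrt 2 : ℂ))
              = (Complex.I * Complex.I) * (((Real.sqrt 2 : ℝ) : ℂ) * ((Real.sqrt 2 : ℝ) : ℂ))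
            from by ring, Complex.I_mul_I, hs2]
          ring
        have hEh : om ε r d (sv r d 0) (sv r d r) = 0 := by
          rw [om_sv_sv hd01 (by omega) (by omega), if_neg (by omega), if_neg (by omega), mul_zero]
        have hFh : om ε r d (sv r d (2*r+d-1)) (sv r d r) = 0 := by
          rw [om_sv_sv hd01 (by omega) (by omega), if_neg (by omega), if_neg (by omega), mul_zero]
        have hhh : om ε r d (sv r d r) (sv r d r) = 1 := by
          rw [om_sv_sv hd01 (by omega) (by omega), if_neg (by omega), if_pos (by omega)]
          norm_num
        refine ⟨?_, ?_, ?_, fun _ => ?_, ?_⟩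
        · rw [om_smul_right, hEdef, hhV, hEh, mul_zero]
        · rw [om_smul_right, hFdef, hhV, hFh, mul_zero]
        · rw [om_smul_left, om_smul_right, hhV, hhh, hBε]
          rw [show (-1 : ℂ) - 1 = -2 from by norm_num, ← hc2]
          ring
        · intro h
          have h0 := congrFun h ⟨r, by omega⟩
          rw [hhV] at h0
          simp only [Pi.smul_apply, Pi.zero_apply, smul_eq_mul] at h0
          rw [sv_apply, if_pos rfl, mul_one] at h0
          rw [h0] at hc2
          norm_num at hc2
        · simp only [Pi.smul_apply, smul_eq_mul]
          rw [hhV, sv_apply, if_neg (by simp only [Fin.val_mk]; omega), mul_zero]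
      · have hC := hx0c hA hB
        have hr2' : 2 ≤ r := by
          rcases hεd with ⟨h1, h2⟩ | ⟨h1, h2⟩ | ⟨h1, h2⟩
          · rcases Nat.lt_or_ge r 2 with h | h
            · exact absurd ⟨h1, h2, by omega⟩ hB
            · exact h
          · rcases Nat.lt_or_ge r 2 with h | h
            · exact absurd ⟨h1, h2, by omega⟩ hA
            · exact h
          · exact hr2 ⟨h1, h2⟩
        have hn4 : 4 ≤ 2*r+d := by omega
        have he' : eV r d (r-1) = sv r d 1 := by
          funext k; unfold eV sv; rw [show r-(r-1) = 1 from by omega]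
        have hf' : fV r d (r-1) = sv r d (2*r+d-2) := by
          funext k; unfold fV sv; rw [show r+d+(r-1)-1 = 2*r+d-2 from by omega]
        rw [hC, he', hf']
        have h11' : om ε r d (sv r d 1) (sv r d 1) = 0 := by
          rw [om_sv_sv hd01 (by omega) (by omega), if_pos (by omega), if_neg (by omega), mul_zero]
        have h1b : om ε r d (sv r d 1) (sv r d (2*r+d-2)) = 1 := by
          rw [om_sv_sv hd01 (by omega) (by omega), if_neg (by omega), if_pos (by omega)]
          norm_num
        have hb1 : om ε r d (sv r d (2*r+d-2)) (sv r d 1) = ε := by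
          rw [om_sv_sv hd01 (by omega) (by omega), if_pos (by omega), if_pos (by omega), mul_one]
        have hbb : om ε r d (sv r d (2*r+d-2)) (sv r d (2*r+d-2)) = 0 := by
          rw [om_sv_sv hd01 (by omega) (by omega), if_neg (by omega), if_neg (by omega), mul_zero]
        have hE1 : om ε r d (sv r d 0) (sv r d 1) = 0 := by
          rw [om_sv_sv hd01 (by omega) (by omega), if_pos (by omega), if_neg (by omega), mul_zero]
        have hEb : om ε r d (sv r d 0) (sv r d (2*r+d-2)) = 0 := by
          rw [om_sv_sv hd01 (by omega) (by omega), if_neg (by omega), if_neg (by omega), mul_zero]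
        have hF1 : om ε r d (sv r d (2*r+d-1)) (sv r d 1) = 0 := by
          rw [om_sv_sv hd01 (by omega) (by omega), if_pos (by omega), if_neg (by omega), mul_zero]
        have hFb : om ε r d (sv r d (2*r+d-1)) (sv r d (2*r+d-2)) = 0 := by
          rw [om_sv_sv hd01 (by omega) (by omega), if_neg (by omega), if_neg (by omega), mul_zero]
        refine ⟨?_, ?_, ?_, fun _ => ?_, ?_⟩
        · rw [hEdef, om_sub_right, hE1, hEb]
          ring
        · rw [hFdef, om_sub_right, hF1, hFb]
          ring
        · rw [om_sub_left, om_sub_right, om_sub_right, h11', h1b, hb1, hbb]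
          ring
        · intro h
          have h0 := congrFun h ⟨1, by omega⟩
          simp only [Pi.sub_apply, Pi.zero_apply] at h0
          rw [sv_apply, sv_apply, if_pos (by simp only [Fin.val_mk]),
            if_neg (by simp only [Fin.val_mk]; omega)] at h0
          norm_num at h0
        · simp only [Pi.sub_apply]
          rw [sv_apply, sv_apply, if_neg (by simp only [Fin.val_mk]; omega),
            if_neg (by simp only [Fin.val_mk]; omega)]
          ring
  obtain ⟨hEX, hFX, hXX, hXne, hX0⟩ := hx0f
  have hXE : om ε r d x0 (eV r d r) = 0 := by rw [hcomm, hEX, mul_zero]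
  have hXF : om ε r d x0 (fV r d r) = 0 := by rw [hcomm, hFX, mul_zero]
  have hEΦ : om ε r d (eV r d r) φ2 = 1 := by
    rw [hφ2, om_add_right, om_add_right, hEE, hEF, hEX]
    ring
  have hFΦ : om ε r d (fV r d r) φ2 = ε := by
    rw [hφ2, om_add_right, om_add_right, hFE, hFF, hFX]
    ring
  have hΦΦ : om ε r d φ2 φ2 = 0 := by
    rw [hφ2, om_add_left, om_add_left, om_add_right, om_add_right, om_add_right,
      om_add_right, om_add_right, om_add_right, hEE, hEF, hEX, hFE, hFF, hFX, hXE, hXF, hXX]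
    ring
  have hΦne : φ2 ≠ 0 := by
    intro h
    have h0 := congrFun h ⟨0, by omega⟩
    rw [hφ2] at h0
    simp only [Pi.add_apply, Pi.zero_apply] at h0
    rw [hEdef, hFdef, sv_apply, sv_apply, if_pos (by simp only [Fin.val_mk]),
      if_neg (by simp only [Fin.val_mk]; omega), hX0] at h0
    norm_num at h0
  refine ⟨⟨hΦne, hΦΦ⟩, ?_⟩
  intro v0 v1 v2 hv0 hv1 hv2 h01 h02 h12 hli
  by_cases hA : ε = -1 ∧ d = 0 ∧ r = 1
  · exfalso
    have hcard := hli.fintype_card_le_finrank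
    rw [Module.finrank_fin_fun ℂ] at hcard
    simp only [Fintype.card_fin] at hcard
    omega
  have hn3 : 3 ≤ 2*r+d := by
    rcases hεd with ⟨h1, h2⟩ | ⟨h1, h2⟩ | ⟨h1, h2⟩
    · omega
    · have : r ≠ 1 := fun hr => hA ⟨h1, h2, hr⟩
      omega
    · have := hr2 ⟨h1, h2⟩
      omega
  have hXne' : x0 ≠ 0 := hXne hA
  -- scaling
  obtain ⟨s, hs⟩ := IsAlgClosed.exists_pow_nat_eq
    (om ε r d v1 v2 * ε / (om ε r d v0 v1 * om ε r d v0 v2)) (n := 2) (by norm_num)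
  have hsne : s ≠ 0 := by
    intro h
    have hne : om ε r d v1 v2 * ε / (om ε r d v0 v1 * om ε r d v0 v2) ≠ 0 :=
      div_ne_zero (mul_ne_zero h12 hε0) (mul_ne_zero h01 h02)
    apply hne
    rw [← hs, h]
    ring
  have hs2 : s * s * (om ε r d v0 v1 * om ε r d v0 v2) = om ε r d v1 v2 * ε := by
    have := hs
    field_simp at this
    linear_combination this
  set c0 : ℂ := s with hc0def
  set c1 : ℂ := (s * om ε r d v0 v1)⁻¹ with hc1def
  set c2 : ℂ := (s * om ε r d v0 v2)⁻¹ with hc2def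
  have hc1ne : c1 ≠ 0 := inv_ne_zero (mul_ne_zero hsne h01)
  have hc2ne : c2 ≠ 0 := inv_ne_zero (mul_ne_zero hsne h02)
  set u0 : Vc r d := c0 • v0 with hu0def
  set u1 : Vc r d := c1 • v1 with hu1def
  set u2 : Vc r d := c2 • v2 with hu2def
  have hsm : ∀ (a b : ℂ) (x y : Vc r d), om ε r d (a • x) (b • y) = a * b * om ε r d x y := by
    intro a b x y
    rw [om_smul_left, om_smul_right]
    ring
  have hu00 : om ε r d u0 u0 = 0 := by rw [hu0def, hsm, hv0.2]; ring
  have hu11 : om ε r d u1 u1 = 0 := by rw [hu1def, hsm, hv1.2]; ring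
  have hu22 : om ε r d u2 u2 = 0 := by rw [hu2def, hsm, hv2.2]; ring
  have hu01 : om ε r d u0 u1 = 1 := by
    rw [hu0def, hu1def, hsm, hc0def, hc1def]
    field_simp [show s ≠ 0 from hsne]
  have hu02 : om ε r d u0 u2 = 1 := by
    rw [hu0def, hu2def, hsm, hc0def, hc2def]
    field_simp [show s ≠ 0 from hsne]
  have hu12 : om ε r d u1 u2 = ε := by
    rw [hu1def, hu2def, hsm, hc1def, hc2def]
    field_simp [show s ≠ 0 from hsne]
    linear_combination (-ε) * hs2 - om ε r d v1 v2 * hε2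
  have hwne : u2 - u0 - u1 ≠ 0 := by
    intro h
    have h3 : ∑ i : Fin 3, (![-c0, -c1, c2] i) • (![v0, v1, v2] i) = 0 := by
      rw [Fin.sum_univ_three]
      simp only [Matrix.cons_val_zero, Matrix.cons_val_one, Matrix.head_cons,
        Matrix.cons_val_two, Matrix.tail_cons]
      rw [neg_smul, neg_smul]
      rw [hu0def, hu1def, hu2def] at h
      linear_combination (norm := module) h
    have := Fintype.linearIndependent_iff.mp hli _ h3 2
    simp only [Matrix.cons_val_two, Matrix.tail_cons, Matrix.cons_val_one, Matrix.head_cons] at this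
    exact hc2ne this
  obtain ⟨bS, hS0, hS1, hS2, hGS⟩ := triple_basis hε hd1 hd01 hn3 u0 u1 u2
    hu00 hu11 hu22 hu01 hu02 hu12 hwne
  have hwT : φ2 - eV r d r - fV r d r = x0 := by
    rw [hφ2]
    abel
  obtain ⟨bT, hT0, hT1, hT2, hGT⟩ := triple_basis hε hd1 hd01 hn3
    (eV r d r) (fV r d r) φ2 hEE hFF hΦΦ hEF hEΦ hFΦ (by rw [hwT]; exact hXne')
  set g := bS.equiv bT (Equiv.refl _) with hgdef
  have hInG : InG ε r d g := by
    intro v w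
    exact isom_of_gram bS bT (fun i j => by rw [hGS i j, hGT i j]) v w
  have hgu0 : g u0 = eV r d r := by
    rw [← hS0, hgdef, Module.Basis.equiv_apply, Equiv.refl_apply, hT0]
  have hgu1 : g u1 = fV r d r := by
    rw [← hS1, hgdef, Module.Basis.equiv_apply, Equiv.refl_apply, hT1]
  have hgw : g (u2 - u0 - u1) = φ2 - eV r d r - fV r d r := by
    rw [← hS2, hgdef, Module.Basis.equiv_apply, Equiv.refl_apply, hT2]
  have hgu2 : g u2 = φ2 := by
    have hsplit : u2 = (u2 - u0 - u1) + u0 + u1 := by abel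
    rw [hsplit, map_add, map_add, hgw, hgu0, hgu1]
    abel
  refine ⟨g, hInG, ⟨c0⁻¹, inv_ne_zero hsne, ?_⟩, ⟨c1⁻¹, inv_ne_zero hc1ne, ?_⟩,
    ⟨c2⁻¹, inv_ne_zero hc2ne, ?_⟩⟩
  · have hv0u : v0 = c0⁻¹ • u0 := by
      rw [hu0def, smul_smul, inv_mul_cancel₀ hsne, one_smul]
    rw [hv0u, map_smul, hgu0]
  · have hv1u : v1 = c1⁻¹ • u1 := by
      rw [hu1def, smul_smul, inv_mul_cancel₀ hc1ne, one_smul]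
    rw [hv1u, map_smul, hgu1]
  · have hv2u : v2 = c2⁻¹ • u2 := by
      rw [hu2def, smul_smul, inv_mul_cancel₀ hc2ne, one_smul]
    rw [hv2u, map_smul, hgu2]
end DCM
end
end

section
/- Fix (ε,d) ∈ {(1,1),(−1,0),(1,0)} and r ≥ r₁. For every tuple p = ([v₀],[v₁],[v₂],[v₃]) ∈ P_r^{(4)} and any choice of representatives v₀,v₁,v₂,v₃, the Gram determinant satisfies det((ω(v_i,v_j))_{0≤i,j≤3}) = Δ(CR₁(p),CR₂(p)) · (ω(v₀,v₁)·ω(v₂,v₃))². -/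
noncomputable section

open scoped Classical

namespace DCM

lemma om_swap (ε : ℂ) (r d : ℕ)
    (hεd : (ε = 1 ∧ d = 1) ∨ (ε = -1 ∧ d = 0) ∨ (ε = 1 ∧ d = 0))
    (v w : Vc r d) : om ε r d w v = ε * om ε r d v w := by
  rcases hεd with ⟨hε, hd⟩ | ⟨hε, hd⟩ | ⟨hε, hd⟩ <;> subst hε <;> subst hd <;>
    (simp only [om, mul_add, Finset.mul_sum]
     congr 1
     · exact Finset.sum_congr rfl fun j _ => by ring
     · split <;> first | (exfalso; omega) | ring)


lemma det4_aux (E a b c e f g : ℂ) :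
    (!![0, a, b, c; E*a, 0, e, f; E*b, E*e, 0, g; E*c, E*f, E*g, 0]).det =
      E^2 * (c^2*e^2 - 2*b*c*e*f + b^2*f^2 - 2*a*b*f*g + a^2*g^2)
        - (E + E^3) * (a*c*e*g) := by
  simp [Matrix.det_succ_row_zero, Fin.sum_univ_succ, Fin.succAbove, Fin.castSucc,
    Fin.castAdd, Fin.castLE, -Fin.val_fin_lt]
  ring

/-- The Gram determinant of a tuple in `P_r^{(4)}` equals
`Δ(CR₁,CR₂) · (ω(v₀,v₁)·ω(v₂,v₃))²`. -/
theorem statement_7 (ε : ℂ) (d : ℕ)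
    (hεd : (ε = 1 ∧ d = 1) ∨ (ε = -1 ∧ d = 0) ∨ (ε = 1 ∧ d = 0))
    (r : ℕ) (hr1 : 1 ≤ r) (hr2 : ε = 1 ∧ d = 0 → 2 ≤ r)
    (v0 v1 v2 v3 : Vc r d) (hp : Conf4 ε r d v0 v1 v2 v3) :
    (Matrix.of fun i j : Fin 4 =>
        om ε r d (![v0, v1, v2, v3] i) (![v0, v1, v2, v3] j)).det
      = Del ε (CR1 ε r d v0 v1 v2 v3) (CR2 ε r d v0 v1 v2 v3) *
          (om ε r d v0 v1 * om ε r d v2 v3) ^ 2 := by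
  obtain ⟨⟨-, h00⟩, ⟨-, h11⟩, ⟨-, h22⟩, ⟨-, h33⟩, h01, h02, h03, h12, h13, h23⟩ := hp
  have h10 := om_swap ε r d hεd v0 v1
  have h20 := om_swap ε r d hεd v0 v2
  have h30 := om_swap ε r d hεd v0 v3
  have h21 := om_swap ε r d hεd v1 v2
  have h31 := om_swap ε r d hεd v1 v3
  have h32 := om_swap ε r d hεd v2 v3
  have hε : ε = 1 ∨ ε = -1 := by rcases hεd with ⟨h, -⟩ | ⟨h, -⟩ | ⟨h, -⟩ <;> simp [h]
  have hM : (Matrix.of fun i j : Fin 4 =>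
        om ε r d (![v0, v1, v2, v3] i) (![v0, v1, v2, v3] j)) =
      !![0, om ε r d v0 v1, om ε r d v0 v2, om ε r d v0 v3;
         ε * om ε r d v0 v1, 0, om ε r d v1 v2, om ε r d v1 v3;
         ε * om ε r d v0 v2, ε * om ε r d v1 v2, 0, om ε r d v2 v3;
         ε * om ε r d v0 v3, ε * om ε r d v1 v3, ε * om ε r d v2 v3, 0] := by
    ext i j
    fin_cases i <;> fin_cases j <;>
      simp [h00, h11, h22, h33, h10, h20, h30, h21, h31, h32]
  rw [hM, det4_aux]
  unfold Del Gam CR1 CR2 CR0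
  rw [h10, h20, h21]
  rcases hε with hε | hε <;> subst hε <;>
    (field_simp
     ring)
end DCM
end
end

section
/- Fix (ε,d) ∈ {(1,1),(−1,0),(1,0)} and r ≥ r₁. Let p = ([v₀],[v₁],[v₂],[v₃]) ∈ P_r^{(4)} with fixed representatives v_i, let proj be the perpendicular projection onto the plane ⟨v₀,v₁⟩ given by proj(v) = (ω(v₁,v)/ω(v₁,v₀))·v₀ + (ω(v₀,v)/ω(v₀,v₁))·v₁, and write v̂ = v − proj(v). Then: (i) ω(v̂,ŵ) = ω(v̂,w) = ω(v,ŵ) for all v,w ∈ V_r; (ii) for every isotropic u ∈ V_r, q(û) = −(1+ε)·(ω(v₁,u)·ω(u,v₀)/ω(v₀,v₁)); (iii) ω(v̂₂,v̂₃) = ω(v₂,v₃)·Γ(CR₁(p),CR₂(p)); (iv) ω(v̂₂,v̂₃)² − q(v̂₂)·q(v̂₃) = ω(v₂,v₃)²·Δ(CR₁(p),CR₂(p)). -/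
noncomputable section

open scoped Classical

namespace DCM

private def tm (ε : ℂ) (r d : ℕ) (v w : Vc r d) (j : Fin r) : ℂ :=
  v ⟨r - 1 - (j : ℕ), by have := j.isLt; omega⟩ * w ⟨r + d + (j : ℕ), by have := j.isLt; omega⟩ +
    ε * v ⟨r + d + (j : ℕ), by have := j.isLt; omega⟩ * w ⟨r - 1 - (j : ℕ), by have := j.isLt; omega⟩

private lemma om_def' (ε : ℂ) (r d : ℕ) (v w : Vc r d) :
    om ε r d v w = (∑ j : Fin r, tm ε r d v w j) +
      (if _hd : d = 1 then v ⟨r, by omega⟩ * w ⟨r, by omega⟩ else 0) := rfl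

private lemma om_addsmul_left (ε : ℂ) (r d : ℕ) (c : ℂ) (u v w : Vc r d) :
    om ε r d (u + c • v) w = om ε r d u w + c * om ε r d v w := by
  rw [om_def', om_def', om_def']
  rw [Finset.sum_congr rfl (fun j _ => (show tm ε r d (u + c • v) w j
      = tm ε r d u w j + c * tm ε r d v w j from by
    simp only [tm, Pi.add_apply, Pi.smul_apply, smul_eq_mul]; ring)),
    Finset.sum_add_distrib, ← Finset.mul_sum]
  split_ifs with hd
  · simp only [Pi.add_apply, Pi.smul_apply, smul_eq_mul]; ring
  · ring

private lemma om_addsmul_right (ε : ℂ) (r d : ℕ) (c : ℂ) (v u w : Vc r d) :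
    om ε r d v (u + c • w) = om ε r d v u + c * om ε r d v w := by
  rw [om_def', om_def', om_def']
  rw [Finset.sum_congr rfl (fun j _ => (show tm ε r d v (u + c • w) j
      = tm ε r d v u j + c * tm ε r d v w j from by
    simp only [tm, Pi.add_apply, Pi.smul_apply, smul_eq_mul]; ring)),
    Finset.sum_add_distrib, ← Finset.mul_sum]
  split_ifs with hd
  · simp only [Pi.add_apply, Pi.smul_apply, smul_eq_mul]; ring
  · ring

private lemma om_symm' (ε : ℂ) (r d : ℕ) (h1 : ε * ε = 1) (h2 : d = 1 → ε = 1) (v w : Vc r d) :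
    om ε r d w v = ε * om ε r d v w := by
  rw [om_def', om_def']
  rw [Finset.sum_congr rfl (fun j _ => (show tm ε r d w v j = ε * tm ε r d v w j from by
    simp only [tm]
    linear_combination (-(v ⟨r + d + (j : ℕ), by have := j.isLt; omega⟩ *
      w ⟨r - 1 - (j : ℕ), by have := j.isLt; omega⟩)) * h1)), ← Finset.mul_sum]
  rw [mul_add]
  congr 1
  split_ifs with hd
  · rw [h2 hd]; ring
  · ring

private lemma om_expandL (ε : ℂ) (r d : ℕ) (a b : ℂ) (x y v w : Vc r d) :
    om ε r d (v - (a • x + b • y)) w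
      = om ε r d v w - a * om ε r d x w - b * om ε r d y w := by
  have h : v - (a • x + b • y) = (v + (-a) • x) + (-b) • y := by
    ext k; simp [Pi.sub_apply, Pi.add_apply, Pi.smul_apply]; ring
  rw [h, om_addsmul_left, om_addsmul_left]; ring

private lemma om_expandR (ε : ℂ) (r d : ℕ) (a b : ℂ) (x y v w : Vc r d) :
    om ε r d v (w - (a • x + b • y))
      = om ε r d v w - a * om ε r d v x - b * om ε r d v y := by
  have h : w - (a • x + b • y) = (w + (-a) • x) + (-b) • y := by
    ext k; simp [Pi.sub_apply, Pi.add_apply, Pi.smul_apply]; ring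
  rw [h, om_addsmul_right, om_addsmul_right]; ring

set_option maxHeartbeats 2000000

/-- Properties of the perpendicular projection onto `⟨v₀,v₁⟩` and of the
complement map `v ↦ v̂ = v − proj(v)`, for a tuple in `P_r^{(4)}`. -/
theorem statement_8 (ε : ℂ) (d : ℕ)
    (hεd : (ε = 1 ∧ d = 1) ∨ (ε = -1 ∧ d = 0) ∨ (ε = 1 ∧ d = 0))
    (r : ℕ) (hr1 : 1 ≤ r) (hr2 : ε = 1 ∧ d = 0 → 2 ≤ r)
    (v0 v1 v2 v3 : Vc r d) (hp : Conf4 ε r d v0 v1 v2 v3)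
    (hat : Vc r d → Vc r d)
    (hhat : ∀ v, hat v = v - ((om ε r d v1 v / om ε r d v1 v0) • v0 +
      (om ε r d v0 v / om ε r d v0 v1) • v1)) :
    -- (i)
    (∀ v w : Vc r d, om ε r d (hat v) (hat w) = om ε r d (hat v) w ∧
      om ε r d (hat v) (hat w) = om ε r d v (hat w)) ∧
    -- (ii)
    (∀ u : Vc r d, IsoV ε r d u →
      om ε r d (hat u) (hat u)
        = -(1 + ε) * (om ε r d v1 u * om ε r d u v0 / om ε r d v0 v1)) ∧
    -- (iii)
    om ε r d (hat v2) (hat v3)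
      = om ε r d v2 v3 * Gam (CR1 ε r d v0 v1 v2 v3) (CR2 ε r d v0 v1 v2 v3) ∧
    -- (iv)
    om ε r d (hat v2) (hat v3) ^ 2 - om ε r d (hat v2) (hat v2) * om ε r d (hat v3) (hat v3)
      = om ε r d v2 v3 ^ 2 * Del ε (CR1 ε r d v0 v1 v2 v3) (CR2 ε r d v0 v1 v2 v3) := by
  have hε2 : ε * ε = 1 := by
    rcases hεd with ⟨h, -⟩ | ⟨h, -⟩ | ⟨h, -⟩ <;> rw [h] <;> ring
  have hd1 : d = 1 → ε = 1 := by
    intro hd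
    rcases hεd with ⟨h, -⟩ | ⟨-, hd'⟩ | ⟨h, -⟩ <;> first | exact h | omega
  have hsym : ∀ a b : Vc r d, om ε r d b a = ε * om ε r d a b :=
    fun a b => om_symm' ε r d hε2 hd1 a b
  have hεor : ε = 1 ∨ ε = -1 := by
    have h0 : (ε - 1) * (ε + 1) = 0 := by linear_combination hε2
    rcases mul_eq_zero.mp h0 with h | h
    · left; linear_combination h
    · right; linear_combination h
  have hε0 : ε ≠ 0 := by rcases hεor with h | h <;> rw [h] <;> norm_num
  obtain ⟨hv0, hv1, hv2, hv3, h01, h02, h03, h12, h13, h23⟩ := hp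
  have h00 := hv0.2; have h11 := hv1.2
  have h10 : om ε r d v1 v0 = ε * om ε r d v0 v1 := hsym v0 v1
  have hatL : ∀ v w, om ε r d (hat v) w = om ε r d v w
      - (om ε r d v1 v / om ε r d v1 v0) * om ε r d v0 w
      - (om ε r d v0 v / om ε r d v0 v1) * om ε r d v1 w := by
    intro v w; rw [hhat v]; exact om_expandL ε r d _ _ _ _ _ _
  have hatR : ∀ v w, om ε r d v (hat w) = om ε r d v w
      - (om ε r d v1 w / om ε r d v1 v0) * om ε r d v v0
      - (om ε r d v0 w / om ε r d v0 v1) * om ε r d v v1 := by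
    intro v w; rw [hhat w]; exact om_expandR ε r d _ _ _ _ _ _
  have hz0 : ∀ v, om ε r d (hat v) v0 = 0 := by
    intro v
    rw [hatL, h00, hsym v0 v, h10]
    field_simp [h01]
    try ring
  have hz1 : ∀ v, om ε r d (hat v) v1 = 0 := by
    intro v
    rw [hatL, h11, hsym v1 v, h10]
    rcases hεor with h | h <;> subst h <;> field_simp [h01] <;> ring
  have hzR0 : ∀ w, om ε r d v0 (hat w) = 0 := by
    intro w
    rw [hatR, h00]
    field_simp [h01]
    try ring
  have hzR1 : ∀ w, om ε r d v1 (hat w) = 0 := by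
    intro w
    rw [hatR, h11, h10]
    rcases hεor with h | h <;> subst h <;> field_simp [h01] <;> ring
  have hi : ∀ v w : Vc r d, om ε r d (hat v) (hat w) = om ε r d (hat v) w ∧
      om ε r d (hat v) (hat w) = om ε r d v (hat w) := by
    intro v w
    constructor
    · rw [hatR (hat v) w, hz0, hz1]; ring
    · rw [hatL v (hat w), hzR0, hzR1]; ring
  have hii : ∀ u : Vc r d, IsoV ε r d u →
      om ε r d (hat u) (hat u)
        = -(1 + ε) * (om ε r d v1 u * om ε r d u v0 / om ε r d v0 v1) := by
    intro u hu
    rw [(hi u u).1, hatL u u, hu.2, hsym v0 u, h10]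
    rcases hεor with h | h <;> subst h <;> field_simp [h01] <;> ring
  have hiii : om ε r d (hat v2) (hat v3)
      = om ε r d v2 v3 * Gam (CR1 ε r d v0 v1 v2 v3) (CR2 ε r d v0 v1 v2 v3) := by
    rw [(hi v2 v3).1, hatL v2 v3]
    simp only [CR1, CR2, CR0, Gam]
    rw [h10, hsym v0 v2, hsym v1 v2]
    rcases hεor with h | h <;> subst h <;>
      field_simp [h01, h02, h03, h12, h13, h23] <;> ring
  refine ⟨hi, hii, hiii, ?_⟩
  rw [hiii, hii v2 hv2, hii v3 hv3]
  simp only [CR1, CR2, CR0, Gam, Del]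
  rw [h10, hsym v0 v2, hsym v1 v2, hsym v0 v3]
  rcases hεor with h | h <;> subst h <;>
    field_simp [h01, h02, h03, h12, h13, h23] <;> ring
end DCM
end
end
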